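/- Let V be a finite type, ι a finite type, N a natural number, and E : ι → Finset V a family of hyperedges with (E e).card = N for every e, with incidence matrix B ∈ Matrix V ι ℕ (B v e = 1 if v ∈ E e, else 0). Then the total number of pairs (i, j) with (B * Bᵀ) i j ≠ 0 is at most N^2 * Fintype.card ι. -/
import Mathlib


open Matrix

/-- Space complexity of clique-expanded graph construction: `B * Bᵀ` has at most
`N² * |ι|` nonzero entries for an `N`-uniform hypergraph. -/
theorem incidence_mul_transpose_nnz_le {V ι : Type*} [Fintype V] [Fintype ι] [DecidableEq V]
    (N : ℕ) (E : ι → Finset V) (hE : ∀ e, (E e).card = N)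
    (B : Matrix V ι ℕ) (hB : ∀ v e, B v e = if v ∈ E e then 1 else 0) :
    (Finset.univ.filter (fun p : V × V => (B * Bᵀ) p.1 p.2 ≠ 0)).card
      ≤ N ^ 2 * Fintype.card ι := by
  classical
  have hsub : (Finset.univ.filter (fun p : V × V => (B * Bᵀ) p.1 p.2 ≠ 0)) ⊆
      Finset.univ.biUnion (fun e : ι => E e ×ˢ E e) := by
    intro p hp
    simp only [Finset.mem_filter, Finset.mem_univ, true_and] at hp
    have : ∃ e : ι, B p.1 e * Bᵀ e p.2 ≠ 0 := by
      by_contra h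
      push_neg at h
      apply hp
      rw [Matrix.mul_apply]; exact Finset.sum_eq_zero fun e _ => h e
    obtain ⟨e, he⟩ := this
    rw [hB, Matrix.transpose_apply, hB] at he
    simp only [Finset.mem_biUnion, Finset.mem_univ, true_and, Finset.mem_product]
    refine ⟨e, ?_, ?_⟩ <;> by_contra h <;> simp [h] at he
  calc (Finset.univ.filter (fun p : V × V => (B * Bᵀ) p.1 p.2 ≠ 0)).card
      ≤ (Finset.univ.biUnion (fun e : ι => E e ×ˢ E e)).card := Finset.card_le_card hsub
    _ ≤ ∑ e : ι, (E e ×ˢ E e).card := Finset.card_biUnion_le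
    _ = ∑ _e : ι, N ^ 2 := by
        refine Finset.sum_congr rfl fun e _ => ?_
        rw [Finset.card_product, hE, sq]
    _ = N ^ 2 * Fintype.card ι := by
        rw [Finset.sum_const, Finset.card_univ, smul_eq_mul, mul_comm]
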